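/- arXiv:1503.01615 — 3 statements merged into one kernel-verified Lean document; each statement's English description precedes it below -/
import Mathlib

section
/- Let φ : [t₀, ∞) → (1, ∞) satisfy φ(k̃ t) ≥ (k̃ φ(t))^{d̃} for t ≥ t₀ with k̃ > 1, d̃ > 1. Let p ∈ [n, n+1) for some n ∈ ℕ and set d = d̃^p, k = k̃^{2n+2}. Then φ(k t) ≥ (k φ(t))^{d} for all t ≥ t₀. -/
open Real Finset

/-- If the regularity inequality `φ(k̃ t) ≥ (k̃ φ(t))^d̃` holds for the exponent
`d̃`, then it holds for every exponent `d = d̃^p` with `p ∈ [n, n+1)`, with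
`k = k̃^{2n+2}` in place of `k̃`. -/
theorem regularity_for_larger_exponent
    (φ : ℝ → ℝ) (t₀ k d : ℝ) (ht₀ : 0 < t₀) (hk : 1 < k) (hd : 1 < d)
    (hφ1 : ∀ t, t₀ ≤ t → 1 < φ t)
    (hreg : ∀ t, t₀ ≤ t → (k * φ t) ^ d ≤ φ (k * t))
    (p : ℝ) (n : ℕ) (hpn : (n : ℝ) ≤ p) (hpn1 : p < n + 1) :
    ∀ t, t₀ ≤ t →
      (k ^ (2 * n + 2) * φ t) ^ (d ^ p) ≤ φ (k ^ (2 * n + 2) * t) := by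
  have hk0 : (0:ℝ) < k := lt_trans one_pos hk
  have hd0 : (0:ℝ) < d := lt_trans one_pos hd
  -- AM-GM type lemma
  have key : ∀ i : ℕ, 2 * d ^ i ≤ 1 + d ^ (2 * i + 1) := by
    intro i
    have hx : (1:ℝ) ≤ d ^ i := one_le_pow₀ hd.le
    have h2 : d ^ (2 * i + 1) = d * (d ^ i) ^ 2 := by ring
    nlinarith [sq_nonneg (d ^ i - 1)]
  -- sum lower bound
  have hsum : ∀ m : ℕ, ((2 * m + 2 : ℕ) : ℝ) * d ^ (m + 1) ≤
      ∑ j ∈ range (2 * m + 2), d ^ (j + 1) := by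
    intro m
    induction m with
    | zero =>
      simp [Finset.sum_range_succ]
      nlinarith
    | succ m ih =>
      have e1 : 2 * (m + 1) + 2 = (2 * m + 2) + 1 + 1 := by ring
      rw [e1, Finset.sum_range_succ, Finset.sum_range_succ']
      have e2 : ∑ j ∈ range (2 * m + 2), d ^ (j + 1 + 1)
          = (∑ j ∈ range (2 * m + 2), d ^ (j + 1)) * d := by
        rw [Finset.sum_mul]
        exact Finset.sum_congr rfl (fun j _ => by ring)
      rw [e2]
      have h1 : ((2 * m + 2 : ℕ) : ℝ) * d ^ (m + 1) * d ≤
          (∑ j ∈ range (2 * m + 2), d ^ (j + 1)) * d :=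
        mul_le_mul_of_nonneg_right ih hd0.le
      have h2 : 2 * d ^ (m + 2) ≤ d ^ 1 + d ^ ((2 * m + 2) + 1 + 1) := by
        have hkey := key (m + 1)
        have e3 : d ^ ((2*m+2)+1+1) = d * d ^ (2 * (m+1) + 1) := by ring
        have e4 : d ^ (m + 2) = d * d ^ (m + 1) := by ring
        rw [e3, e4, pow_one]
        nlinarith
      have e5 : d ^ (m + 1 + 1) = d ^ (m + 1) * d := by ring
      have e6 : d ^ (2 * m + 3 + 1) = d ^ ((2 * m + 2) + 1 + 1) := by ring
      push_cast
      push_cast at h1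
      rw [e5, e6]
      rw [pow_one] at h2
      nlinarith [pow_pos hd0 (m+1)]
  -- main iteration
  have main : ∀ m : ℕ, ∀ t, t₀ ≤ t →
      k ^ (∑ j ∈ range m, d ^ (j + 1)) * φ t ^ ((d ^ m : ℝ)) ≤ φ (k ^ m * t) := by
    intro m
    induction m with
    | zero =>
      intro t ht
      simp [Real.rpow_natCast]
    | succ m ih =>
      intro t ht
      have ht' : t₀ ≤ k ^ m * t := by
        have : (1:ℝ) ≤ k ^ m := one_le_pow₀ hk.le
        nlinarith [ht₀.trans_le ht]
      have hφm : 1 < φ (k ^ m * t) := hφ1 _ ht'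
      have hA : (0:ℝ) < k ^ (∑ j ∈ range m, d ^ (j + 1)) * φ t ^ ((d ^ m : ℝ)) := by
        have h1 := Real.rpow_pos_of_pos hk0 (∑ j ∈ range m, d ^ (j + 1))
        have h2 := Real.rpow_pos_of_pos (lt_trans one_pos (hφ1 t ht)) ((d ^ m : ℝ))
        positivity
      have step := hreg (k ^ m * t) ht'
      have mono : (k * (k ^ (∑ j ∈ range m, d ^ (j + 1)) * φ t ^ ((d ^ m : ℝ)))) ^ d
          ≤ (k * φ (k ^ m * t)) ^ d := by
        apply Real.rpow_le_rpow (by positivity) _ hd0.le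
        exact mul_le_mul_of_nonneg_left (ih t ht) hk0.le
      have heq : (k * (k ^ (∑ j ∈ range m, d ^ (j + 1)) * φ t ^ ((d ^ m : ℝ)))) ^ d
          = k ^ (∑ j ∈ range (m + 1), d ^ (j + 1)) * φ t ^ ((d ^ (m + 1) : ℝ)) := by
        have hφ0 : (0:ℝ) < φ t := lt_trans one_pos (hφ1 t ht)
        rw [Real.mul_rpow hk0.le hA.le,
            Real.mul_rpow (Real.rpow_pos_of_pos hk0 _).le (Real.rpow_pos_of_pos hφ0 _).le,
            ← Real.rpow_mul hk0.le, ← Real.rpow_mul hφ0.le, ← mul_assoc,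
            ← Real.rpow_add hk0]
        have eS : ∑ j ∈ range (m + 1), d ^ (j + 1)
            = d + (∑ j ∈ range m, d ^ (j + 1)) * d := by
          have e : ∑ j ∈ range m, d ^ (j + 1 + 1)
              = ∑ j ∈ range m, d ^ (j + 1) * d :=
            Finset.sum_congr rfl fun j _ => pow_succ d (j + 1)
          rw [Finset.sum_range_succ', e, ← Finset.sum_mul]
          ring
        rw [eS, pow_succ]
      have : k ^ (∑ j ∈ range (m + 1), d ^ (j + 1)) * φ t ^ ((d ^ (m + 1) : ℝ))
          ≤ φ (k * (k ^ m * t)) := heq ▸ (mono.trans step)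
      calc k ^ (∑ j ∈ range (m + 1), d ^ (j + 1)) * φ t ^ ((d ^ (m + 1) : ℝ))
          ≤ φ (k * (k ^ m * t)) := this
        _ = φ (k ^ (m + 1) * t) := by ring_nf
  -- conclude
  intro t ht
  have hφ0 : (1:ℝ) < φ t := hφ1 t ht
  have hm := main (2 * n + 2) t ht
  have hLHS : (k ^ (2 * n + 2) * φ t) ^ (d ^ p)
      = k ^ (((2 * n + 2 : ℕ) : ℝ) * d ^ p) * φ t ^ (d ^ p) := by
    rw [Real.mul_rpow (by positivity) (by positivity), ← Real.rpow_natCast k (2*n+2),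
        ← Real.rpow_mul hk0.le]
  rw [hLHS]
  have hdp1 : d ^ p ≤ (d ^ (n + 1) : ℝ) := by
    have : d ^ p ≤ d ^ ((n : ℝ) + 1) :=
      Real.rpow_le_rpow_left_iff hd |>.mpr hpn1.le
    calc d ^ p ≤ d ^ ((n:ℝ)+1) := this
      _ = (d ^ (n+1) : ℝ) := by
        rw [← Real.rpow_natCast d (n+1)]; push_cast; ring_nf
  have hdp2 : d ^ p ≤ (d ^ (2 * n + 2) : ℝ) := by
    have : d ^ p ≤ d ^ ((2 * n + 2 : ℕ) : ℝ) := by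
      apply Real.rpow_le_rpow_left_iff hd |>.mpr
      push_cast; nlinarith [Nat.cast_nonneg (α := ℝ) n]
    calc d ^ p ≤ d ^ ((2*n+2 : ℕ) : ℝ) := this
      _ = (d ^ (2*n+2) : ℝ) := Real.rpow_natCast d (2*n+2)
  have hkexp : k ^ (((2 * n + 2 : ℕ) : ℝ) * d ^ p) ≤ k ^ (∑ j ∈ range (2*n+2), d ^ (j+1)) := by
    apply Real.rpow_le_rpow_left_iff hk |>.mpr
    calc ((2 * n + 2 : ℕ) : ℝ) * d ^ p ≤ ((2 * n + 2 : ℕ) : ℝ) * (d ^ (n+1) : ℝ) := by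
          apply mul_le_mul_of_nonneg_left hdp1 (by positivity)
      _ ≤ ∑ j ∈ range (2*n+2), d ^ (j+1) := hsum n
  have hφexp : φ t ^ (d ^ p) ≤ φ t ^ ((d ^ (2*n+2) : ℝ)) :=
    Real.rpow_le_rpow_left_iff hφ0 |>.mpr hdp2
  calc k ^ (((2 * n + 2 : ℕ) : ℝ) * d ^ p) * φ t ^ (d ^ p)
      ≤ k ^ (∑ j ∈ range (2*n+2), d ^ (j+1)) * φ t ^ ((d ^ (2*n+2) : ℝ)) := by
        apply mul_le_mul hkexp hφexp (by positivity) (by positivity)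
    _ ≤ φ (k ^ (2*n+2) * t) := hm
end

section
/- Let 1 < c̃ < c and let M, μ : [R₀, ∞) → [R₀, ∞) be increasing with M(r) ≥ exp((log r)^c) and μ(r) ≤ exp((log r)^{c̃}) for all r > R₀, where log R₀ > 1. Then for every m ∈ ℕ there exists N ∈ ℕ such that for all n > N and all r > R₀: μ^{n+m}(r) < M^n(r), where superscripts denote iteration. -/
/-- Growth comparison from Example 2: if `M(r) ≥ exp((log r)^c)` and
`μ(r) ≤ exp((log r)^c̃)` with `1 < c̃ < c`, then for each `m` there is `N` so that
`μ^{n+m}(r) < Mⁿ(r)` for all `n > N` and `r > R₀`. -/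
theorem iterates_growth_comparison
    (M μ : ℝ → ℝ) (R₀ c c' : ℝ) (hR₀ : 1 < Real.log R₀)
    (hc' : 1 < c') (hcc' : c' < c)
    (hMmono : MonotoneOn M (Set.Ici R₀)) (hμmono : MonotoneOn μ (Set.Ici R₀))
    (hMmap : ∀ r, R₀ ≤ r → R₀ ≤ M r) (hμmap : ∀ r, R₀ ≤ r → R₀ ≤ μ r)
    (hμr : ∀ r, R₀ ≤ r → r ≤ μ r)
    (hM : ∀ r, R₀ < r → Real.exp ((Real.log r) ^ c) ≤ M r)
    (hμ : ∀ r, R₀ < r → μ r ≤ Real.exp ((Real.log r) ^ c')) :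
    ∀ m : ℕ, ∃ N : ℕ, ∀ n : ℕ, N < n → ∀ r, R₀ < r →
      μ^[n + m] r < M^[n] r := by
  have hc : 1 < c := hc'.trans hcc'
  -- First, rule out small `R₀`: from `hμr` and `hμ` at `r = exp (1/2)` we get a
  -- contradiction if `R₀ ≤ 1`.
  have hR₀1 : 1 < R₀ := by
    by_contra h
    push_neg at h
    set r : ℝ := Real.exp (1/2) with hr
    have hr1 : (1:ℝ) < r := by
      rw [hr]
      have : Real.exp 0 < Real.exp (1/2) := Real.exp_lt_exp.mpr (by norm_num)
      simpa using this
    have hrR : R₀ < r := lt_of_le_of_lt h hr1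
    have h1 : r ≤ μ r := hμr r hrR.le
    have h2 : μ r ≤ Real.exp ((Real.log r) ^ c') := hμ r hrR
    have hlog : Real.log r = 1/2 := Real.log_exp _
    have h3 : ((1:ℝ)/2) ^ c' < (1/2 : ℝ) := by
      have := Real.rpow_lt_rpow_of_exponent_gt (x := (1:ℝ)/2) (by norm_num) (by norm_num) hc'
      simpa using this
    have h4 : Real.exp ((Real.log r) ^ c') < r := by
      rw [hlog, hr]
      exact Real.exp_lt_exp.mpr h3
    linarith
  have hR₀pos : (0:ℝ) < R₀ := by linarith
  have hlogr : ∀ r, R₀ < r → 1 < Real.log r := fun r hr =>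
    lt_trans hR₀ (Real.log_lt_log hR₀pos hr)
  -- `r ≤ exp ((log r)^e)` for any exponent `e ≥ 1`
  have hexp_ge : ∀ (e : ℝ), 1 ≤ e → ∀ r, R₀ < r → r ≤ Real.exp ((Real.log r) ^ e) := by
    intro e he r hr
    have h1 : Real.log r ≤ (Real.log r) ^ e := by
      have := Real.rpow_le_rpow_of_exponent_le (hlogr r hr).le he
      simpa using this
    calc r = Real.exp (Real.log r) := (Real.exp_log (by linarith [hlogr r hr, hR₀pos])).symm
    _ ≤ Real.exp ((Real.log r) ^ e) := Real.exp_le_exp.mpr h1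
  have hcn1 : ∀ n : ℕ, (1:ℝ) ≤ c ^ n := fun n => one_le_pow₀ hc.le
  have hc'n1 : ∀ n : ℕ, (1:ℝ) ≤ c' ^ n := fun n => one_le_pow₀ hc'.le
  -- Iterate lower bound for M
  have hMb : ∀ n : ℕ, ∀ r, R₀ < r → Real.exp ((Real.log r) ^ (c ^ n)) ≤ M^[n] r := by
    intro n
    induction n with
    | zero =>
      intro r hr
      simp [Real.exp_log (lt_trans hR₀pos hr)]
    | succ n ih =>
      intro r hr
      set E : ℝ := Real.exp ((Real.log r) ^ (c ^ n)) with hE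
      have hEge : r ≤ E := hexp_ge _ (hcn1 n) r hr
      have hER : R₀ < E := lt_of_lt_of_le hr hEge
      have h1 : E ≤ M^[n] r := ih r hr
      have h2 : M E ≤ M (M^[n] r) :=
        hMmono (Set.mem_Ici.mpr hER.le) (Set.mem_Ici.mpr (hER.le.trans h1)) h1
      have h3 : Real.exp ((Real.log E) ^ c) ≤ M E := hM E hER
      have hlogE : Real.log E = (Real.log r) ^ (c ^ n) := Real.log_exp _
      rw [Function.iterate_succ_apply']
      calc Real.exp ((Real.log r) ^ (c ^ (n+1))) = Real.exp ((Real.log E) ^ c) := by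
            rw [hlogE, ← Real.rpow_mul (by linarith [hlogr r hr]), ← pow_succ]
      _ ≤ M E := h3
      _ ≤ M (M^[n] r) := h2
  -- iterates of μ stay in [R₀, ∞)
  have hμmapn : ∀ n : ℕ, ∀ r, R₀ ≤ r → R₀ ≤ μ^[n] r := by
    intro n
    induction n with
    | zero => intro r hr; simpa using hr
    | succ n ih =>
      intro r hr
      rw [Function.iterate_succ_apply']
      exact hμmap _ (ih r hr)
  -- Iterate upper bound for μ
  have hμb : ∀ n : ℕ, ∀ r, R₀ < r → μ^[n] r ≤ Real.exp ((Real.log r) ^ (c' ^ n)) := by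
    intro n
    induction n with
    | zero =>
      intro r hr
      simp [Real.exp_log (lt_trans hR₀pos hr)]
    | succ n ih =>
      intro r hr
      set E : ℝ := Real.exp ((Real.log r) ^ (c' ^ n)) with hE
      have hEge : r ≤ E := hexp_ge _ (hc'n1 n) r hr
      have hER : R₀ < E := lt_of_lt_of_le hr hEge
      have h1 : μ^[n] r ≤ E := ih r hr
      have h2 : μ (μ^[n] r) ≤ μ E :=
        hμmono (Set.mem_Ici.mpr (hμmapn n r hr.le)) (Set.mem_Ici.mpr hER.le) h1
      have h3 : μ E ≤ Real.exp ((Real.log E) ^ c') := hμ E hER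
      have hlogE : Real.log E = (Real.log r) ^ (c' ^ n) := Real.log_exp _
      rw [Function.iterate_succ_apply']
      calc μ (μ^[n] r) ≤ μ E := h2
      _ ≤ Real.exp ((Real.log E) ^ c') := h3
      _ = Real.exp ((Real.log r) ^ (c' ^ (n+1))) := by
            rw [hlogE, ← Real.rpow_mul (by linarith [hlogr r hr]), ← pow_succ]
  -- choose N
  intro m
  have hdiv : 1 < c / c' := (one_lt_div (by linarith)).mpr hcc'
  obtain ⟨N, hN⟩ := pow_unbounded_of_one_lt (c' ^ m) hdiv
  refine ⟨N, fun n hn r hr => ?_⟩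
  have hexp_lt : c' ^ (n + m) < c ^ n := by
    have h1 : (c / c') ^ N ≤ (c / c') ^ n := pow_le_pow_right₀ hdiv.le hn.le
    have h2 : c' ^ m < (c / c') ^ n := lt_of_lt_of_le hN h1
    have h3 : c' ^ n * c' ^ m < c' ^ n * (c / c') ^ n :=
      mul_lt_mul_of_pos_left h2 (pow_pos (by linarith) n)
    calc c' ^ (n + m) = c' ^ n * c' ^ m := pow_add _ _ _
    _ < c' ^ n * (c / c') ^ n := h3
    _ = (c' * (c / c')) ^ n := (mul_pow _ _ _).symm
    _ = c ^ n := by rw [mul_div_cancel₀ _ (by linarith : c' ≠ 0)]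
  calc μ^[n + m] r ≤ Real.exp ((Real.log r) ^ (c' ^ (n + m))) := hμb _ r hr
  _ < Real.exp ((Real.log r) ^ (c ^ n)) :=
      Real.exp_lt_exp.mpr (Real.rpow_lt_rpow_of_exponent_lt (hlogr r hr) hexp_lt)
  _ ≤ M^[n] r := hMb n r hr
end

section
/- Let M : ℝ → ℝ (representing r ↦ M(r, f₂)) satisfy log M(r^c) ≥ c log M(r) for all r ≥ R₀ and c > 1 (with M(r) > 1), and let L : ℝ → ℝ (representing r ↦ M(r, f₁)) be increasing and satisfy (log L(r^k))^ε ≥ k log L(r) for r ≥ R, with ε = (2/3)ε′, ν = k^{1/2}, k′ = k^{3/2}. Assume the composition bound N(ν s) ≥ L(M(s)) ≥ N(s) for s ≥ R₂, where N(r) represents M(r, f₁∘f₂). Then there exists R′ such that (log N(r^{k′}))^{ε′} ≥ k′ log N(r) for all r ≥ R′ (assuming log N(r) ≥ 1 for r ≥ R′). -/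
/-- Strong log-regularity is preserved under composition: with `M = M(·,f₂)`,
`L = M(·,f₁)`, `N = M(·,f₁∘f₂)`, `ε = (2/3)ε′`, `ν = k^{1/2}`, `k′ = k^{3/2}`,
the chain of inequalities yields `(log N(r^{k′}))^{ε′} ≥ k′ log N(r)` for large `r`. -/
theorem composition_strongly_log_regular
    (M L N : ℝ → ℝ) (R₀ R R₂ ε' k : ℝ)
    (hε'0 : 0 < ε') (hε'1 : ε' < 1) (hk : 1 < k)
    (hM1 : ∀ r, R₀ ≤ r → 1 < M r)
    (hMsub : ∀ r, R₀ ≤ r → ∀ c : ℝ, 1 < c →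
      c * Real.log (M r) ≤ Real.log (M (r ^ c)))
    (hLmono : Monotone L)
    (hLreg : ∀ r, R ≤ r →
      k * Real.log (L r) ≤ (Real.log (L (r ^ k))) ^ (2 / 3 * ε'))
    (hcomp : ∀ s, R₂ ≤ s →
      N s ≤ L (M s) ∧ L (M s) ≤ N (k ^ ((1 : ℝ) / 2) * s))
    (hN1 : ∃ R₃ : ℝ, ∀ r, R₃ ≤ r → 1 ≤ Real.log (N r)) :
    ∃ R' : ℝ, ∀ r, R' ≤ r →
      k ^ ((3 : ℝ) / 2) * Real.log (N r) ≤
        (Real.log (N (r ^ (k ^ ((3 : ℝ) / 2))))) ^ ε' := by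
  obtain ⟨R₃, hR₃⟩ := hN1
  have hk0 : (0:ℝ) < k := lt_trans one_pos hk
  set ν : ℝ := k ^ ((1:ℝ)/2) with hνdef
  set k' : ℝ := k ^ ((3:ℝ)/2) with hk'def
  have hν1 : 1 < ν := by
    rw [hνdef, Real.one_lt_rpow_iff_of_pos hk0]
    exact Or.inl ⟨hk, by norm_num⟩
  have hν0 : 0 < ν := lt_trans one_pos hν1
  have hkk' : k < k' := by
    have h := Real.rpow_lt_rpow_of_exponent_lt hk (show (1:ℝ) < 3/2 by norm_num)
    rwa [Real.rpow_one] at h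
  have h1k' : 1 < k' := lt_trans hk hkk'
  -- M is unbounded
  have hgrow : ∀ T : ℝ, ∃ S : ℝ, ∀ s, S ≤ s → T ≤ M s := by
    intro T
    set r₀ : ℝ := max R₀ 2 with hr₀def
    have hr₀R₀ : R₀ ≤ r₀ := le_max_left _ _
    have hr₀2 : (2:ℝ) ≤ r₀ := le_max_right _ _
    have hr₀1 : (1:ℝ) < r₀ := lt_of_lt_of_le one_lt_two hr₀2
    have hr₀0 : (0:ℝ) < r₀ := lt_trans one_pos hr₀1
    have hM₀ : 1 < M r₀ := hM1 r₀ hr₀R₀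
    have hlr₀ : 0 < Real.log r₀ := Real.log_pos hr₀1
    have hlM₀ : 0 < Real.log (M r₀) := Real.log_pos hM₀
    set T' : ℝ := max T 1 with hT'def
    have hT'0 : (0:ℝ) < T' := lt_of_lt_of_le one_pos (le_max_right _ _)
    refine ⟨max (Real.exp (Real.log T' * Real.log r₀ / Real.log (M r₀))) (r₀ + 1),
      fun s hs => ?_⟩
    have hs1 : r₀ + 1 ≤ s := le_trans (le_max_right _ _) hs
    have hsr₀ : r₀ < s := lt_of_lt_of_le (lt_add_one r₀) hs1
    have hs0 : 0 < s := lt_trans hr₀0 hsr₀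
    have hlogs : Real.log r₀ < Real.log s := Real.log_lt_log hr₀0 hsr₀
    have hse : Real.exp (Real.log T' * Real.log r₀ / Real.log (M r₀)) ≤ s :=
      le_trans (le_max_left _ _) hs
    have hlogs2 : Real.log T' * Real.log r₀ / Real.log (M r₀) ≤ Real.log s := by
      have h := Real.log_le_log (Real.exp_pos _) hse
      rwa [Real.log_exp] at h
    set c₁ : ℝ := Real.log s / Real.log r₀ with hc₁def
    have hc₁ : 1 < c₁ := (one_lt_div hlr₀).mpr hlogs
    have hsc : r₀ ^ c₁ = s := by
      rw [Real.rpow_def_of_pos hr₀0, hc₁def, mul_comm (Real.log r₀),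
        div_mul_cancel₀ _ (ne_of_gt hlr₀), Real.exp_log hs0]
    have h1 := hMsub r₀ hr₀R₀ c₁ hc₁
    rw [hsc] at h1
    have h2 : Real.log T' ≤ c₁ * Real.log (M r₀) := by
      rw [hc₁def, div_mul_eq_mul_div, le_div_iff₀ hlr₀]
      calc Real.log T' * Real.log r₀
          = Real.log T' * Real.log r₀ / Real.log (M r₀) * Real.log (M r₀) := by
            field_simp
        _ ≤ Real.log s * Real.log (M r₀) :=
            mul_le_mul_of_nonneg_right hlogs2 (le_of_lt hlM₀)
    have hMs1 : 1 < M s := hM1 s (le_trans hr₀R₀ (le_of_lt hsr₀))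
    have h3 : Real.log T' ≤ Real.log (M s) := le_trans h2 h1
    have h4 := (Real.log_le_log_iff hT'0 (lt_trans one_pos hMs1)).mp h3
    exact le_trans (le_max_left _ _) h4
  -- L is somewhere positive
  have hLpos : ∃ x₀ : ℝ, 0 < L x₀ := by
    by_contra h0
    push_neg at h0
    have hA : ∀ t, max R₂ R₃ ≤ t → N t ≤ -Real.exp 1 := by
      intro t ht
      have ht2 : R₂ ≤ t := le_trans (le_max_left _ _) ht
      have ht3 : R₃ ≤ t := le_trans (le_max_right _ _) ht
      have hNt : N t ≤ 0 := le_trans (hcomp t ht2).1 (h0 _)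
      have hlog : 1 ≤ Real.log (N t) := hR₃ t ht3
      rcases lt_or_eq_of_le hNt with h | h
      · have h1 : 1 ≤ Real.log (-N t) := by rwa [Real.log_neg_eq_log]
        have h2 := (Real.le_log_iff_exp_le (by linarith)).mp h1
        linarith
      · rw [h, Real.log_zero] at hlog; linarith
    have hB : ∀ x : ℝ, L x ≤ -Real.exp 1 := by
      intro x
      obtain ⟨S, hS⟩ := hgrow x
      set s : ℝ := max S (max (max R₂ R₃) 0) with hsdef
      have hs2 : R₂ ≤ s :=
        le_trans (le_trans (le_max_left _ _) (le_max_left _ _)) (le_max_right _ _)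
      have hs0 : (0:ℝ) ≤ s := le_trans (le_max_right _ _) (le_max_right _ _)
      have hνs : max R₂ R₃ ≤ ν * s := by
        have h1 : max R₂ R₃ ≤ s := le_trans (le_max_left _ _) (le_max_right _ _)
        have h2 : s ≤ ν * s := le_mul_of_one_le_left hs0 (le_of_lt hν1)
        linarith
      have hMx : x ≤ M s := hS s (le_max_left _ _)
      calc L x ≤ L (M s) := hLmono hMx
        _ ≤ N (ν * s) := (hcomp s hs2).2
        _ ≤ -Real.exp 1 := hA _ hνs
    set y0 : ℝ := max R 2 with hy0def
    have hy02 : (2:ℝ) ≤ y0 := le_max_right _ _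
    have hy01 : (1:ℝ) ≤ y0 := by linarith
    have hy0R : R ≤ y0 := le_max_left _ _
    set y : ℕ → ℝ := fun n => y0 ^ (k ^ n) with hydef
    have hkn1 : ∀ n : ℕ, (1:ℝ) ≤ k ^ n := fun n => one_le_pow₀ (le_of_lt hk)
    have hyge : ∀ n, y0 ≤ y n := by
      intro n
      have h := Real.rpow_le_rpow_of_exponent_le hy01 (hkn1 n)
      rwa [Real.rpow_one] at h
    have hysucc : ∀ n, y (n+1) = (y n) ^ k := by
      intro n
      show y0 ^ (k ^ (n+1)) = (y0 ^ (k ^ n)) ^ k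
      rw [← Real.rpow_mul (by linarith : (0:ℝ) ≤ y0), ← pow_succ]
    have hLy : ∀ x : ℝ, Real.log (L x) = Real.log (-L x) :=
      fun x => (Real.log_neg_eq_log _).symm
    have hone : ∀ x : ℝ, 1 ≤ Real.log (L x) := by
      intro x
      have h1 := hB x
      have h2 : Real.exp 1 ≤ -L x := by linarith
      have h3 : (0:ℝ) < -L x := lt_of_lt_of_le (Real.exp_pos 1) h2
      rw [hLy]
      exact (Real.le_log_iff_exp_le h3).mpr h2
    have hgrowth : ∀ n, (k : ℝ) ^ n ≤ Real.log (L (y n)) := by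
      intro n
      induction n with
      | zero => simpa using hone (y 0)
      | succ n ih =>
        have hR' : R ≤ y n := le_trans hy0R (hyge n)
        have hreg := hLreg (y n) hR'
        rw [← hysucc n] at hreg
        have hb1 : 1 ≤ Real.log (L (y (n+1))) := hone _
        have hba : (Real.log (L (y (n+1)))) ^ (2/3 * ε') ≤ Real.log (L (y (n+1))) := by
          have h := Real.rpow_le_rpow_of_exponent_le hb1
            (show 2/3 * ε' ≤ 1 by nlinarith)
          rwa [Real.rpow_one] at h
        calc (k:ℝ) ^ (n+1) = k * k ^ n := by ring
          _ ≤ k * Real.log (L (y n)) := by nlinarith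
          _ ≤ (Real.log (L (y (n+1)))) ^ (2/3 * ε') := hreg
          _ ≤ Real.log (L (y (n+1))) := hba
    have hbound : ∀ n, Real.log (L (y n)) ≤ Real.log (-L y0) := by
      intro n
      rw [hLy]
      have h1 : L y0 ≤ L (y n) := hLmono (hyge n)
      have h3 : (0:ℝ) < -L (y n) := by
        have := hB (y n); linarith [Real.exp_pos 1]
      exact Real.log_le_log h3 (by linarith)
    obtain ⟨n, hn⟩ := pow_unbounded_of_one_lt (Real.log (-L y0)) hk
    exact absurd (le_trans (hgrowth n) (hbound n)) (not_le.mpr hn)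
  obtain ⟨x₀, hx₀⟩ := hLpos
  obtain ⟨S₀, hS₀⟩ := hgrow (max x₀ (max R 1))
  refine ⟨max (max (max R₃ R₂) (max R₀ 2))
      (max (max S₀ (max (max S₀ R₂) 0 * ν)) (Real.exp (Real.log ν / (k' - k)))),
    fun r hr => ?_⟩
  have hc1 : R₃ ≤ r :=
    le_trans (le_trans (le_trans (le_max_left _ _) (le_max_left _ _)) (le_max_left _ _)) hr
  have hc2 : R₂ ≤ r :=
    le_trans (le_trans (le_trans (le_max_right _ _) (le_max_left _ _)) (le_max_left _ _)) hr
  have hc3 : R₀ ≤ r :=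
    le_trans (le_trans (le_trans (le_max_left _ _) (le_max_right _ _)) (le_max_left _ _)) hr
  have hc4 : (2:ℝ) ≤ r :=
    le_trans (le_trans (le_trans (le_max_right _ _) (le_max_right _ _)) (le_max_left _ _)) hr
  have hc5 : S₀ ≤ r :=
    le_trans (le_trans (le_trans (le_max_left _ _) (le_max_left _ _)) (le_max_right _ _)) hr
  have hc6 : max (max S₀ R₂) 0 * ν ≤ r :=
    le_trans (le_trans (le_trans (le_max_right _ _) (le_max_left _ _)) (le_max_right _ _)) hr
  have hc7 : Real.exp (Real.log ν / (k' - k)) ≤ r :=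
    le_trans (le_trans (le_max_right _ _) (le_max_right _ _)) hr
  have hr1 : (1:ℝ) < r := lt_of_lt_of_le one_lt_two hc4
  have hr0 : (0:ℝ) < r := lt_trans one_pos hr1
  have hlogr : 0 < Real.log r := Real.log_pos hr1
  have hlogν : 0 < Real.log ν := Real.log_pos hν1
  have hkk'0 : 0 < k' - k := sub_pos.mpr hkk'
  have hc7' : Real.log ν / (k' - k) ≤ Real.log r := by
    have h := Real.log_le_log (Real.exp_pos _) hc7
    rwa [Real.log_exp] at h
  have hdle : Real.log ν / Real.log r ≤ k' - k := by
    rw [div_le_iff₀ hlogr]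
    rw [div_le_iff₀ hkk'0] at hc7'
    calc Real.log ν ≤ Real.log r * (k' - k) := hc7'
      _ = (k' - k) * Real.log r := mul_comm _ _
  set c : ℝ := k' - Real.log ν / Real.log r with hcdef
  have hkc : k ≤ c := by rw [hcdef]; linarith
  have h1c : 1 < c := lt_of_lt_of_le hk hkc
  have hrc : r ^ c = r ^ k' / ν := by
    rw [hcdef, Real.rpow_sub hr0]
    congr 1
    rw [Real.rpow_def_of_pos hr0, mul_comm (Real.log r),
      div_mul_cancel₀ _ (ne_of_gt hlogr), Real.exp_log hν0]
  have hrlec : r ≤ r ^ c := by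
    have h := Real.rpow_le_rpow_of_exponent_le (le_of_lt hr1) (le_of_lt h1c)
    rwa [Real.rpow_one] at h
  have hMr1 : 1 < M r := hM1 r hc3
  have hMr0 : (0:ℝ) < M r := lt_trans one_pos hMr1
  have hMrc1 : 1 < M (r ^ c) := hM1 _ (le_trans hc3 hrlec)
  have hlogMr : 0 ≤ Real.log (M r) := Real.log_nonneg (le_of_lt hMr1)
  have hMrk : M r ^ k ≤ M (r ^ c) := by
    have h1 := hMsub r hc3 c h1c
    have h2 : k * Real.log (M r) ≤ c * Real.log (M r) :=
      mul_le_mul_of_nonneg_right hkc hlogMr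
    have h3 : Real.log (M r ^ k) ≤ Real.log (M (r ^ c)) := by
      rw [Real.log_rpow hMr0]; linarith
    exact (Real.log_le_log_iff (Real.rpow_pos_of_pos hMr0 k)
      (lt_trans one_pos hMrc1)).mp h3
  have hνrc : ν * r ^ c = r ^ k' := by
    rw [hrc]; field_simp
  have hLMN : L (M r ^ k) ≤ N (r ^ k') := by
    have h1 : L (M r ^ k) ≤ L (M (r ^ c)) := hLmono hMrk
    have h2 := (hcomp (r ^ c) (le_trans hc2 hrlec)).2
    rw [hνrc] at h2
    exact le_trans h1 h2
  have hrν : max (max S₀ R₂) 0 ≤ r / ν := by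
    rw [le_div_iff₀ hν0]; exact hc6
  have hS₀rν : S₀ ≤ r / ν := le_trans (le_trans (le_max_left _ _) (le_max_left _ _)) hrν
  have hR₂rν : R₂ ≤ r / ν := le_trans (le_trans (le_max_right _ _) (le_max_left _ _)) hrν
  have hMrν : x₀ ≤ M (r / ν) := le_trans (le_max_left _ _) (hS₀ _ hS₀rν)
  have hνrν : ν * (r / ν) = r := by field_simp
  have hNr0 : 0 < N r := by
    have h1 : L x₀ ≤ L (M (r / ν)) := hLmono hMrν
    have h2 := (hcomp (r / ν) hR₂rν).2
    rw [hνrν] at h2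
    linarith
  have hlogNr : 1 ≤ Real.log (N r) := hR₃ r hc1
  have heNr : Real.exp 1 ≤ N r := (Real.le_log_iff_exp_le hNr0).mp hlogNr
  have hNLMr : N r ≤ L (M r) := (hcomp r hc2).1
  have hMrR : R ≤ M r :=
    le_trans (le_trans (le_max_left _ _) (le_max_right _ _)) (hS₀ r hc5)
  have hMrleMrk : M r ≤ M r ^ k := by
    have h := Real.rpow_le_rpow_of_exponent_le (le_of_lt hMr1) (le_of_lt hk)
    rwa [Real.rpow_one] at h
  have hLMrk_pos : Real.exp 1 ≤ L (M r ^ k) :=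
    le_trans heNr (le_trans hNLMr (hLmono hMrleMrk))
  have hLMrk0 : (0:ℝ) < L (M r ^ k) := lt_of_lt_of_le (Real.exp_pos 1) hLMrk_pos
  have hlogLMrk : 1 ≤ Real.log (L (M r ^ k)) :=
    (Real.le_log_iff_exp_le hLMrk0).mpr hLMrk_pos
  have hreg := hLreg (M r) hMrR
  have hlogNrk' : 1 ≤ Real.log (N (r ^ k')) := by
    apply hR₃
    have h : r ≤ r ^ k' := by
      have h2 := Real.rpow_le_rpow_of_exponent_le (le_of_lt hr1) (le_of_lt h1k')
      rwa [Real.rpow_one] at h2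
    linarith
  have hmono2 : Real.log (L (M r ^ k)) ≤ Real.log (N (r ^ k')) :=
    Real.log_le_log hLMrk0 hLMN
  have hstep : (Real.log (L (M r ^ k))) ^ (2/3 * ε')
      ≤ (Real.log (N (r ^ k'))) ^ (2/3 * ε') :=
    Real.rpow_le_rpow (by linarith) hmono2 (by positivity)
  have hkey : k * Real.log (L (M r)) ≤ (Real.log (N (r ^ k'))) ^ (2/3 * ε') :=
    le_trans hreg hstep
  have hlogNr_le : Real.log (N r) ≤ Real.log (L (M r)) := Real.log_le_log hNr0 hNLMr
  have hlogLMr1 : 1 ≤ Real.log (L (M r)) := le_trans hlogNr hlogNr_le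
  have hfin1 : (k * Real.log (N r)) ^ ((3:ℝ)/2)
      ≤ (k * Real.log (L (M r))) ^ ((3:ℝ)/2) :=
    Real.rpow_le_rpow (mul_nonneg (le_of_lt hk0) (by linarith))
      (mul_le_mul_of_nonneg_left hlogNr_le (le_of_lt hk0)) (by norm_num)
  have hfin2 : (k * Real.log (L (M r))) ^ ((3:ℝ)/2)
      ≤ ((Real.log (N (r ^ k'))) ^ (2/3 * ε')) ^ ((3:ℝ)/2) :=
    Real.rpow_le_rpow (mul_nonneg (le_of_lt hk0) (by linarith)) hkey (by norm_num)
  have heq : ((Real.log (N (r ^ k'))) ^ (2/3 * ε')) ^ ((3:ℝ)/2)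
      = (Real.log (N (r ^ k'))) ^ ε' := by
    rw [← Real.rpow_mul (by linarith : (0:ℝ) ≤ Real.log (N (r ^ k')))]
    congr 1
    ring
  have hsplit : (k * Real.log (N r)) ^ ((3:ℝ)/2)
      = k ^ ((3:ℝ)/2) * (Real.log (N r)) ^ ((3:ℝ)/2) :=
    Real.mul_rpow (le_of_lt hk0) (by linarith)
  have hlog32 : Real.log (N r) ≤ (Real.log (N r)) ^ ((3:ℝ)/2) := by
    have h := Real.rpow_le_rpow_of_exponent_le hlogNr (show (1:ℝ) ≤ 3/2 by norm_num)
    rwa [Real.rpow_one] at h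
  calc k' * Real.log (N r)
      ≤ k' * (Real.log (N r)) ^ ((3:ℝ)/2) := by
        rw [hk'def]
        exact mul_le_mul_of_nonneg_left hlog32 (Real.rpow_nonneg (le_of_lt hk0) _)
    _ = (k * Real.log (N r)) ^ ((3:ℝ)/2) := by rw [hsplit, hk'def]
    _ ≤ (k * Real.log (L (M r))) ^ ((3:ℝ)/2) := hfin1
    _ ≤ ((Real.log (N (r ^ k'))) ^ (2/3 * ε')) ^ ((3:ℝ)/2) := hfin2
    _ = (Real.log (N (r ^ k'))) ^ ε' := heq
end
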